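/- Let g : ℝⁿ → ℝ be Lipschitz and let L̄, H̄ be a convex conjugate pair (L̄(v) = sup_p (p·v − H̄(p))) with H̄(Dg(x)) ≤ C̃ := ‖Dg‖_∞²/2 + K₀ for a.e. x. Then for all x, y ∈ ℝⁿ and 0 ≤ τ < t, g(x) − g(y) ≤ (t−τ)·[C̃ + L̄((x−y)/(t−τ))]. Consequently, the Hopf–Lax value w satisfies g(x) ≤ w(x,t) + C̃·t. -/

import Mathlib

open NNReal

theorem stmt_6 (n : ℕ) (Hbar Lbar : EuclideanSpace ℝ (Fin n) → ℝ) (K₀ : ℝ) (hK₀ : 0 < K₀)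
    (hHc : Continuous Hbar) (hHconv : ConvexOn ℝ Set.univ Hbar)
    (hHb : ∀ p, ‖p‖ ^ 2 / 2 - K₀ ≤ Hbar p ∧ Hbar p ≤ ‖p‖ ^ 2 / 2 + K₀)
    (hL : ∀ v, Lbar v = ⨆ p : EuclideanSpace ℝ (Fin n), ((inner ℝ p v : ℝ) - Hbar p))
    (g bbar : EuclideanSpace ℝ (Fin n) → ℝ)
    (Lg : ℝ≥0) (hglip : LipschitzWith Lg g)
    (hgb : ∀ x, g x ≤ bbar x)
    (f : EuclideanSpace ℝ (Fin n) → ℝ → ℝ)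
    (hf0 : ∀ y, f y 0 = g y) (hfp : ∀ y τ, 0 < τ → f y τ = bbar y)
    (Ctilde : ℝ) (hCt : Ctilde = (Lg : ℝ) ^ 2 / 2 + K₀)
    (w : EuclideanSpace ℝ (Fin n) → ℝ → ℝ)
    (hw : ∀ x t, 0 < t → w x t =
      sInf {r | ∃ (τ : ℝ) (y : EuclideanSpace ℝ (Fin n)), 0 ≤ τ ∧ τ < t ∧
        r = (t - τ) * Lbar ((t - τ)⁻¹ • (x - y)) + f y τ}) :
    (∀ (x y : EuclideanSpace ℝ (Fin n)) (τ t : ℝ), 0 ≤ τ → τ < t →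
      g x - g y ≤ (t - τ) * (Ctilde + Lbar ((t - τ)⁻¹ • (x - y)))) ∧
    (∀ (x : EuclideanSpace ℝ (Fin n)) (t : ℝ), 0 < t → g x ≤ w x t + Ctilde * t) := by
  have hCt0 : 0 < Ctilde := by
    rw [hCt]; positivity
  -- key: Lg‖v‖ ≤ C̃ + L̄ v
  have key : ∀ v : EuclideanSpace ℝ (Fin n), (Lg : ℝ) * ‖v‖ ≤ Ctilde + Lbar v := by
    intro v
    rw [hL v]
    have hbdd : BddAbove (Set.range fun p : EuclideanSpace ℝ (Fin n) =>
        (inner ℝ p v : ℝ) - Hbar p) := by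
      refine ⟨‖v‖ ^ 2 / 2 + K₀, ?_⟩
      rintro r ⟨p, rfl⟩
      have h1 := (hHb p).1
      have h2 : (inner ℝ p v : ℝ) ≤ ‖p‖ * ‖v‖ := real_inner_le_norm p v
      have h3 : ‖p‖ * ‖v‖ ≤ ‖p‖ ^ 2 / 2 + ‖v‖ ^ 2 / 2 := by nlinarith [sq_nonneg (‖p‖ - ‖v‖)]
      simp only []
      linarith
    rcases eq_or_ne v 0 with rfl | hv
    · have h0 := le_ciSup hbdd (0 : EuclideanSpace ℝ (Fin n))
      have hH0 := (hHb 0).2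
      simp only [inner_zero_left, norm_zero] at h0 hH0 ⊢
      rw [hCt]
      nlinarith [sq_nonneg (Lg : ℝ)]
    · set p : EuclideanSpace ℝ (Fin n) := ((Lg : ℝ) / ‖v‖) • v with hp
      have hvpos : (0:ℝ) < ‖v‖ := norm_pos_iff.mpr hv
      have hnp : ‖p‖ = (Lg : ℝ) := by
        rw [hp, norm_smul, Real.norm_eq_abs, abs_div, abs_of_nonneg Lg.coe_nonneg,
          abs_of_pos hvpos]
        field_simp
      have hip : (inner ℝ p v : ℝ) = (Lg : ℝ) * ‖v‖ := by
        rw [hp, real_inner_smul_left, real_inner_self_eq_norm_sq]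
        field_simp
      have hHp : Hbar p ≤ Ctilde := by
        have := (hHb p).2
        rw [hnp] at this
        rw [hCt]; linarith
      have h0 := le_ciSup hbdd p
      rw [hip] at h0
      linarith
  have part1 : ∀ (x y : EuclideanSpace ℝ (Fin n)) (τ t : ℝ), 0 ≤ τ → τ < t →
      g x - g y ≤ (t - τ) * (Ctilde + Lbar ((t - τ)⁻¹ • (x - y))) := by
    intro x y τ t hτ hτt
    have hs : (0:ℝ) < t - τ := by linarith
    set v : EuclideanSpace ℝ (Fin n) := (t - τ)⁻¹ • (x - y) with hv
    have hnv : ‖x - y‖ = (t - τ) * ‖v‖ := by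
      rw [hv, norm_smul, Real.norm_eq_abs, abs_of_pos (inv_pos.mpr hs)]
      field_simp
    have hlip : g x - g y ≤ (Lg : ℝ) * ‖x - y‖ := by
      have h0 : ‖g x - g y‖ ≤ (Lg : ℝ) * ‖x - y‖ := by
        simpa [dist_eq_norm] using hglip.dist_le_mul x y
      calc g x - g y ≤ ‖g x - g y‖ := Real.le_norm_self _
        _ ≤ (Lg : ℝ) * ‖x - y‖ := h0
    have hk := key v
    have : (Lg : ℝ) * ‖x - y‖ = (t - τ) * ((Lg : ℝ) * ‖v‖) := by rw [hnv]; ring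
    rw [this] at hlip
    calc g x - g y ≤ (t - τ) * ((Lg : ℝ) * ‖v‖) := hlip
      _ ≤ (t - τ) * (Ctilde + Lbar v) := by
          exact mul_le_mul_of_nonneg_left hk (le_of_lt hs)
  refine ⟨part1, ?_⟩
  intro x t ht
  rw [hw x t ht]
  have hne : {r | ∃ (τ : ℝ) (y : EuclideanSpace ℝ (Fin n)), 0 ≤ τ ∧ τ < t ∧
      r = (t - τ) * Lbar ((t - τ)⁻¹ • (x - y)) + f y τ}.Nonempty :=
    ⟨(t - 0) * Lbar ((t - 0)⁻¹ • (x - x)) + f x 0, 0, x, le_refl 0, ht, rfl⟩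
  have hlb : g x - Ctilde * t ≤ sInf {r | ∃ (τ : ℝ) (y : EuclideanSpace ℝ (Fin n)), 0 ≤ τ ∧ τ < t ∧
      r = (t - τ) * Lbar ((t - τ)⁻¹ • (x - y)) + f y τ} := by
    refine le_csInf hne ?_
    rintro r ⟨τ, y, hτ0, hτt, rfl⟩
    have h1 := part1 x y τ t hτ0 hτt
    have hfy : g y ≤ f y τ := by
      rcases eq_or_lt_of_le hτ0 with h | h
      · rw [← h, hf0]
      · rw [hfp y τ h]; exact hgb y
    have hsc : (t - τ) * Ctilde ≤ t * Ctilde := by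
      apply mul_le_mul_of_nonneg_right _ (le_of_lt hCt0)
      linarith
    nlinarith
  linarith
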